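/- Let 0 < β < 1, λ > 0, and let ξ be a real number with |ξ| < λ. Then ∫₀^∞ (e^{iyξ} − 1)·e^{−λy}·y^{−1−β} dy = Σ_{k=1}^∞ (Γ(k−β)/(k!·λ^{k−β}))·(iξ)^k, where the series on the right converges. -/

import Mathlib

open MeasureTheory Set

/-- For `0 < β < 1`, `λ > 0` and `|ξ| < λ`,
`∫₀^∞ (e^{iyξ} − 1)·e^{−λy}·y^{−1−β} dy = Σ_{k=1}^∞ (Γ(k−β)/(k!·λ^{k−β}))·(iξ)^k`,
with the series (indexed here by `k+1`, `k : ℕ`) convergent. -/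
theorem gts_integral_series_expansion (β lam ξ : ℝ) (hβ0 : 0 < β) (hβ1 : β < 1)
    (hlam : 0 < lam) (hξ : |ξ| < lam) :
    Summable (fun k : ℕ =>
        ((Real.Gamma ((k + 1 : ℕ) - β) / ((k + 1 : ℕ).factorial * lam ^ (((k + 1 : ℕ) : ℝ) - β)) : ℝ) : ℂ)
          * (Complex.I * ξ) ^ (k + 1)) ∧
      ∫ y in Ioi (0 : ℝ),
          (Complex.exp (Complex.I * y * ξ) - 1) * Complex.exp (-(lam : ℂ) * y)
            * ((y ^ (-1 - β) : ℝ) : ℂ)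
        = ∑' k : ℕ,
            ((Real.Gamma ((k + 1 : ℕ) - β) / ((k + 1 : ℕ).factorial * lam ^ (((k + 1 : ℕ) : ℝ) - β)) : ℝ) : ℂ)
              * (Complex.I * ξ) ^ (k + 1) := by
  set z : ℂ := Complex.I * ξ with hz
  have hzn : ‖z‖ = |ξ| := by
    simp [hz, norm_mul, Complex.norm_real, Real.norm_eq_abs]
  -- the exponent
  set s : ℕ → ℝ := fun k => (k : ℝ) + 1 - β with hs
  have hspos : ∀ k : ℕ, 0 < s k := by
    intro k
    have : (0:ℝ) ≤ (k:ℝ) := Nat.cast_nonneg k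
    simp only [hs]; nlinarith
  -- the real coefficients
  set c : ℕ → ℝ := fun k => Real.Gamma (s k) / ((k+1).factorial * lam ^ (s k)) with hc
  have hcpos : ∀ k, 0 < c k := by
    intro k
    have h1 : 0 < Real.Gamma (s k) := Real.Gamma_pos_of_pos (hspos k)
    have h2 : (0:ℝ) < (k+1).factorial := by positivity
    have h3 : (0:ℝ) < lam ^ (s k) := Real.rpow_pos_of_pos hlam _
    positivity
  -- the complex series terms
  set a : ℕ → ℂ := fun k => ((c k : ℝ) : ℂ) * z ^ (k+1) with ha
  have hA : (fun k : ℕ =>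
        ((Real.Gamma ((k + 1 : ℕ) - β) / ((k + 1 : ℕ).factorial * lam ^ (((k + 1 : ℕ) : ℝ) - β)) : ℝ) : ℂ)
          * (Complex.I * ξ) ^ (k + 1)) = a := by
    funext k
    simp only [ha, hc, hs, hz]
    push_cast
    ring_nf
  -- ratio bound
  have hratio : ∀ k : ℕ, c (k+1) * lam ≤ c k := by
    intro k
    have hΓ : Real.Gamma (s (k+1)) = s k * Real.Gamma (s k) := by
      have : s (k+1) = s k + 1 := by simp only [hs]; push_cast; ring
      rw [this, Real.Gamma_add_one (hspos k).ne']
    have hrp : lam ^ (s (k+1)) = lam ^ (s k) * lam := by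
      have : s (k+1) = s k + 1 := by simp only [hs]; push_cast; ring
      rw [this, Real.rpow_add hlam, Real.rpow_one]
    have hfac : ((k+2).factorial : ℝ) = (k+2) * (k+1).factorial := by
      rw [Nat.factorial_succ]; push_cast; ring
    have hΓpos : 0 < Real.Gamma (s k) := Real.Gamma_pos_of_pos (hspos k)
    have hfpos : (0:ℝ) < (k+1).factorial := by positivity
    have hlpos : (0:ℝ) < lam ^ (s k) := Real.rpow_pos_of_pos hlam _
    have hsk_le : s k ≤ (k:ℝ) + 2 := by
      simp only [hs]; nlinarith
    simp only [hc] at *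
    rw [show (k+1+1) = k+2 from rfl, hΓ, hrp, hfac]
    rw [div_mul_eq_mul_div, div_le_div_iff₀ (by positivity) (by positivity)]
    have hskpos := hspos k
    nlinarith [mul_pos hΓpos hfpos, mul_pos (mul_pos hΓpos hfpos) hlpos,
      mul_pos hlpos hlam, mul_pos (mul_pos hΓpos hlpos) hlam,
      mul_le_mul_of_nonneg_right hsk_le
        (le_of_lt (mul_pos (mul_pos hΓpos hfpos) (mul_pos hlpos hlam)))]
  -- summability of norms
  have hr1 : |ξ| / lam < 1 := (div_lt_one hlam).mpr hξ
  have hsum_norm : Summable (fun k => c k * |ξ| ^ (k+1)) := by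
    apply summable_of_ratio_norm_eventually_le hr1
    filter_upwards with k
    have h1 : (0:ℝ) ≤ c (k+1) * |ξ| ^ (k+2) :=
      mul_nonneg (hcpos _).le (pow_nonneg (abs_nonneg ξ) _)
    have h2 : (0:ℝ) ≤ c k * |ξ| ^ (k+1) :=
      mul_nonneg (hcpos _).le (pow_nonneg (abs_nonneg ξ) _)
    have hrhs : |ξ| / lam * (c k * |ξ| ^ (k+1)) = c k * (|ξ| ^ (k+1) * |ξ|) / lam := by
      ring
    rw [Real.norm_of_nonneg h1, Real.norm_of_nonneg h2, hrhs, le_div_iff₀ hlam]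
    have h3 := mul_le_mul_of_nonneg_right (hratio k)
      (show (0:ℝ) ≤ |ξ| ^ (k+1) * |ξ| by positivity)
    calc c (k+1) * |ξ| ^ (k+2) * lam
        = c (k+1) * lam * (|ξ| ^ (k+1) * |ξ|) := by ring
      _ ≤ c k * (|ξ| ^ (k+1) * |ξ|) := h3
  have hnorm_a : ∀ k, ‖a k‖ = c k * |ξ| ^ (k+1) := by
    intro k
    simp [ha, norm_mul, norm_pow, hzn, Complex.norm_real, Real.norm_eq_abs,
      abs_of_pos (hcpos k)]
  have hsummable : Summable a := by
    apply Summable.of_norm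
    simpa only [funext hnorm_a] using hsum_norm
  -- the real integrand pieces
  set G : ℕ → ℝ → ℝ := fun k y => y ^ (s k - 1) * Real.exp (-(lam * y)) with hG
  have hGval : ∀ k, ∫ y in Ioi (0:ℝ), G k y = (1/lam) ^ (s k) * Real.Gamma (s k) :=
    fun k => Real.integral_rpow_mul_exp_neg_mul_Ioi (hspos k) hlam
  have hGint : ∀ k, IntegrableOn (G k) (Ioi 0) := by
    intro k
    have h := integrableOn_rpow_mul_exp_neg_mul_rpow
      (s := s k - 1) (p := 1) (b := lam) (by linarith [hspos k]) one_pos hlam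
    apply h.congr_fun _ measurableSet_Ioi
    intro y hy
    rw [mem_Ioi] at hy
    simp [hG, Real.rpow_one]
  -- the complex summand functions
  set F : ℕ → ℝ → ℂ := fun k y =>
    (Complex.I * y * ξ) ^ (k+1) / ((k+1).factorial : ℂ) *
      (Complex.exp (-(lam : ℂ) * y) * ((y ^ (-1 - β) : ℝ) : ℂ)) with hF
  have hFeq : ∀ k : ℕ, ∀ y ∈ Ioi (0:ℝ),
      F k y = (z ^ (k+1) / ((k+1).factorial : ℂ)) * ((G k y : ℝ) : ℂ) := by
    intro k y hy
    rw [mem_Ioi] at hy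
    have h1 : (Complex.I * y * ξ) ^ (k+1) = z ^ (k+1) * (y : ℂ) ^ (k+1) := by
      rw [show Complex.I * y * ξ = z * y by rw [hz]; ring, mul_pow]
    have h2 : (y:ℝ) ^ (k+1) * y ^ (-1 - β) = y ^ (s k - 1) := by
      rw [← Real.rpow_natCast y (k+1), ← Real.rpow_add hy]
      congr 1
      simp only [hs]; push_cast; ring
    have h3 : ((y:ℂ)) ^ (k+1) * ((y ^ (-1 - β) : ℝ) : ℂ) = ((y ^ (s k - 1) : ℝ) : ℂ) := by
      calc ((y:ℂ)) ^ (k+1) * ((y ^ (-1 - β) : ℝ) : ℂ)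
          = (((y:ℝ) ^ (k+1) * y ^ (-1 - β) : ℝ) : ℂ) := by push_cast; ring
        _ = ((y ^ (s k - 1) : ℝ) : ℂ) := by rw [h2]
    simp only [hF, hG, h1]
    rw [Complex.ofReal_mul, Complex.ofReal_exp, ← h3,
      show ((-(lam * y) : ℝ) : ℂ) = -(lam:ℂ) * y by push_cast; ring]
    ring
  -- integrability of each F k
  have hF_int : ∀ k, Integrable (F k) (volume.restrict (Ioi 0)) := by
    intro k
    have h1 : Integrable (fun y : ℝ => (z ^ (k+1) / ((k+1).factorial : ℂ)) * ((G k y : ℝ) : ℂ))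
        (volume.restrict (Ioi 0)) := (hGint k).ofReal.const_mul _
    refine h1.congr ?_
    filter_upwards [ae_restrict_mem measurableSet_Ioi] with y hy
    exact (hFeq k y hy).symm
  have hcoef : ∀ k : ℕ, (1/lam) ^ (s k) * Real.Gamma (s k) / (((k+1).factorial : ℝ)) = c k := by
    intro k
    simp only [hc]
    rw [one_div, Real.inv_rpow hlam.le]
    have h1 : (0:ℝ) < lam ^ (s k) := Real.rpow_pos_of_pos hlam _
    have h2 : (0:ℝ) < ((k+1).factorial : ℝ) := by positivity
    field_simp
  have hF_val : ∀ k : ℕ, ∫ y in Ioi (0:ℝ), F k y = a k := by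
    intro k
    have hcast : ∫ y in Ioi (0:ℝ), ((G k y : ℝ) : ℂ) = ((∫ y in Ioi (0:ℝ), G k y : ℝ) : ℂ) :=
      integral_ofReal
    rw [setIntegral_congr_fun measurableSet_Ioi (fun y hy => hFeq k y hy),
      MeasureTheory.integral_const_mul, hcast, hGval k]
    simp only [ha]
    rw [← hcoef k]
    push_cast
    ring
  have hF_norm : ∀ k : ℕ, ∫ y in Ioi (0:ℝ), ‖F k y‖ = c k * |ξ| ^ (k+1) := by
    intro k
    have heq : ∀ y ∈ Ioi (0:ℝ), ‖F k y‖ = (|ξ| ^ (k+1) / (((k+1).factorial : ℝ))) * G k y := by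
      intro y hy
      rw [mem_Ioi] at hy
      rw [hFeq k y (mem_Ioi.mpr hy)]
      have hGnn : 0 ≤ G k y := by
        simp only [hG]
        exact mul_nonneg (Real.rpow_nonneg hy.le _) (Real.exp_pos _).le
      rw [norm_mul, norm_div, norm_pow, hzn, Complex.norm_real,
        Real.norm_of_nonneg hGnn]
      norm_num
    rw [setIntegral_congr_fun measurableSet_Ioi (fun y hy => heq y hy),
      MeasureTheory.integral_const_mul, hGval k, ← hcoef k]
    ring
  have hsum_int_norm : Summable (fun k => ∫ y in Ioi (0:ℝ), ‖F k y‖) := by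
    simp only [hF_norm]
    exact hsum_norm
  have hswap := MeasureTheory.integral_tsum_of_summable_integral_norm hF_int hsum_int_norm
  -- pointwise series expansion
  have hpt : ∀ y ∈ Ioi (0:ℝ),
      (Complex.exp (Complex.I * y * ξ) - 1) * Complex.exp (-(lam : ℂ) * y)
          * ((y ^ (-1 - β) : ℝ) : ℂ)
        = ∑' k : ℕ, F k y := by
    intro y hy
    simp only [hF]
    set w : ℂ := Complex.I * y * ξ with hw
    have hsumm : Summable (fun n : ℕ => w ^ n / (n.factorial : ℂ)) :=
      NormedSpace.expSeries_div_summable w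
    have hexp : ∑' n : ℕ, w ^ n / (n.factorial : ℂ) = Complex.exp w := by
      rw [Complex.exp_eq_exp_ℂ, NormedSpace.exp_eq_tsum_div]
    rw [Summable.tsum_eq_zero_add hsumm] at hexp
    simp only [pow_zero, Nat.factorial_zero, Nat.cast_one, div_one] at hexp
    have hS : ∑' n : ℕ, w ^ (n+1) / (((n+1).factorial : ℕ) : ℂ) = Complex.exp w - 1 :=
      eq_sub_of_add_eq' hexp
    have htm : ∑' k : ℕ, w ^ (k+1) / (((k+1).factorial : ℕ) : ℂ) *
        (Complex.exp (-(lam : ℂ) * y) * ((y ^ (-1 - β) : ℝ) : ℂ))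
        = (∑' k : ℕ, w ^ (k+1) / (((k+1).factorial : ℕ) : ℂ)) *
        (Complex.exp (-(lam : ℂ) * y) * ((y ^ (-1 - β) : ℝ) : ℂ)) := tsum_mul_right
    rw [htm, hS]
    ring
  constructor
  · rw [hA]; exact hsummable
  · rw [hA, setIntegral_congr_fun measurableSet_Ioi (fun y hy => hpt y hy), ← hswap]
    exact tsum_congr hF_val
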